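/- Let G be a simple graph on a finite vertex set V. If G contains no nontrivial even closed walk, then the number of edges of G is at most the number of vertices of G, i.e. |E(G)| ≤ |V(G)|. -/

import Mathlib

/-- A nontrivial even closed walk in a simple graph: a closed walk of positive even
length such that at least one edge occurs exactly once in its edge sequence and
every edge occurs at most twice in that edge sequence. -/
def IsNontrivialEvenClosedWalk {V : Type*} [DecidableEq V] {G : SimpleGraph V}
    {v : V} (w : G.Walk v v) : Prop :=
  0 < w.length ∧ Even w.length ∧
    (∃ e ∈ w.edges, w.edges.count e = 1) ∧
    (∀ e ∈ w.edges, w.edges.count e ≤ 2)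

open SimpleGraph

section Aux

variable {V : Type*} [DecidableEq V] {G : SimpleGraph V}

lemma walk_length_rotate {u v : V} (c : G.Walk v v) (h : u ∈ c.support) :
    (c.rotate u h).length = c.length := by
  have h1 := congrArg SimpleGraph.Walk.length (c.take_spec h)
  rw [SimpleGraph.Walk.length_append] at h1
  simp only [SimpleGraph.Walk.rotate, SimpleGraph.Walk.length_append]
  omega

/-- An even cycle is a nontrivial even closed walk. -/
lemma cycle_even_ntecw {a : V} {C : G.Walk a a} (hC : C.IsCycle) (hev : Even C.length) :
    IsNontrivialEvenClosedWalk C := by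
  have h3 := hC.three_le_length
  have hnd : C.edges.Nodup := hC.edges_nodup
  refine ⟨by omega, hev, ?_, ?_⟩
  · have hne : C.edges ≠ [] := by
      intro h0
      have := C.length_edges
      rw [h0] at this
      simp at this
      omega
    obtain ⟨e, he⟩ := List.exists_mem_of_ne_nil _ hne
    exact ⟨e, he, List.count_eq_one_of_mem hnd he⟩
  · intro e _
    exact (List.nodup_iff_count_le_one.mp hnd e).trans (by norm_num)

/-- Combination lemma: from a cycle through `e₁` and a cycle avoiding `e₁`, in a
preconnected graph, produce a nontrivial even closed walk. -/
lemma combine (hpre : G.Preconnected) {a b : V} {C1 : G.Walk a a} {C2 : G.Walk b b}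
    (h1 : C1.IsCycle) (h2 : C2.IsCycle) {e1 : Sym2 V} (he1 : e1 ∈ C1.edges)
    (he2 : e1 ∉ C2.edges) :
    ∃ (v : V) (w : G.Walk v v), IsNontrivialEvenClosedWalk w := by
  classical
  by_cases hev1 : Even C1.length
  · exact ⟨a, C1, cycle_even_ntecw h1 hev1⟩
  by_cases hev2 : Even C2.length
  · exact ⟨b, C2, cycle_even_ntecw h2 hev2⟩
  -- both cycles odd
  have hPred : ∃ n : ℕ, ∃ u v : V, u ∈ C1.support ∧ v ∈ C2.support ∧
      ∃ w : G.Walk u v, w.length = n := by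
    obtain ⟨w⟩ := hpre a b
    exact ⟨w.length, a, b, C1.start_mem_support, C2.start_mem_support, w, rfl⟩
  obtain ⟨u, v, hu, hv, w0, hw0⟩ := Nat.find_spec hPred
  set P : G.Walk u v := w0.bypass with hPdef
  have hPpath : P.IsPath := w0.bypass_isPath
  have hPlen : P.length = Nat.find hPred := by
    refine le_antisymm (hw0 ▸ w0.length_bypass_le) ?_
    exact Nat.find_min' hPred ⟨u, v, hu, hv, P, rfl⟩
  have hmin : ∀ m, m < P.length → ¬ (∃ u v : V, u ∈ C1.support ∧ v ∈ C2.support ∧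
      ∃ w : G.Walk u v, w.length = m) := by
    rw [hPlen]; exact fun m hm => Nat.find_min hPred hm
  -- any vertex of P in C1's support equals u
  have p1 : ∀ x (hx : x ∈ P.support), x ∈ C1.support → x = u := by
    intro x hx hxC1
    by_contra hne
    have hsplit := congrArg SimpleGraph.Walk.length (P.take_spec hx)
    rw [SimpleGraph.Walk.length_append] at hsplit
    have htk : (P.takeUntil x hx).length ≠ 0 := by
      intro h0
      exact hne (SimpleGraph.Walk.eq_of_length_eq_zero h0).symm
    exact hmin (P.dropUntil x hx).length (by omega) ⟨x, v, hxC1, hv, P.dropUntil x hx, rfl⟩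
  -- any vertex of P in C2's support equals v
  have p2 : ∀ x (hx : x ∈ P.support), x ∈ C2.support → x = v := by
    intro x hx hxC2
    by_contra hne
    have hsplit := congrArg SimpleGraph.Walk.length (P.take_spec hx)
    rw [SimpleGraph.Walk.length_append] at hsplit
    have hdr : (P.dropUntil x hx).length ≠ 0 := by
      intro h0
      exact hne (SimpleGraph.Walk.eq_of_length_eq_zero h0)
    exact hmin (P.takeUntil x hx).length (by omega) ⟨u, x, hu, hxC2, P.takeUntil x hx, rfl⟩
  -- edges of P avoid C1 and C2
  have p4 : ∀ e ∈ P.edges, e ∉ C1.edges := by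
    intro e heP
    induction e using Sym2.ind with
    | _ x y =>
      intro heC1
      have hx : x = u := p1 x (P.fst_mem_support_of_mem_edges heP)
        (C1.fst_mem_support_of_mem_edges heC1)
      have hy : y = u := p1 y (P.snd_mem_support_of_mem_edges heP)
        (C1.snd_mem_support_of_mem_edges heC1)
      exact (G.ne_of_adj (P.adj_of_mem_edges heP)) (hx.trans hy.symm)
  have p5 : ∀ e ∈ P.edges, e ∉ C2.edges := by
    intro e heP
    induction e using Sym2.ind with
    | _ x y =>
      intro heC2
      have hx : x = v := p2 x (P.fst_mem_support_of_mem_edges heP)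
        (C2.fst_mem_support_of_mem_edges heC2)
      have hy : y = v := p2 y (P.snd_mem_support_of_mem_edges heP)
        (C2.snd_mem_support_of_mem_edges heC2)
      exact (G.ne_of_adj (P.adj_of_mem_edges heP)) (hx.trans hy.symm)
  -- build the walk
  let D1 : G.Walk u u := C1.rotate u hu
  let D2 : G.Walk v v := C2.rotate v hv
  let W : G.Walk u u := D1.append (P.append (D2.append P.reverse))
  have hD1e : ∀ e, D1.edges.count e = C1.edges.count e := fun e =>
    ((C1.rotate_edges u hu).perm.count_eq e)
  have hD2e : ∀ e, D2.edges.count e = C2.edges.count e := fun e =>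
    ((C2.rotate_edges v hv).perm.count_eq e)
  have hWe : ∀ e, W.edges.count e =
      C1.edges.count e + (P.edges.count e + (C2.edges.count e + P.edges.count e)) := by
    intro e
    show ((D1.append (P.append (D2.append P.reverse))).edges).count e = _
    rw [SimpleGraph.Walk.edges_append, SimpleGraph.Walk.edges_append,
      SimpleGraph.Walk.edges_append, SimpleGraph.Walk.edges_reverse]
    simp only [List.count_append, List.count_reverse]
    rw [hD1e, hD2e]
  have hWlen : W.length = C1.length + (P.length + (C2.length + P.length)) := by
    show (D1.append (P.append (D2.append P.reverse))).length = _
    rw [SimpleGraph.Walk.length_append, SimpleGraph.Walk.length_append,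
      SimpleGraph.Walk.length_append, SimpleGraph.Walk.length_reverse,
      walk_length_rotate, walk_length_rotate]
  have h3 := h1.three_le_length
  have hC1nd : C1.edges.Nodup := h1.edges_nodup
  have hC2nd : C2.edges.Nodup := h2.edges_nodup
  have hPnd : P.edges.Nodup := hPpath.isTrail.edges_nodup
  refine ⟨u, W, ?_, ?_, ?_, ?_⟩
  · omega
  · rw [Nat.even_iff] at hev1 hev2 ⊢
    omega
  · refine ⟨e1, ?_, ?_⟩
    · have : W.edges.count e1 ≠ 0 := by
        rw [hWe]
        have : C1.edges.count e1 = 1 := List.count_eq_one_of_mem hC1nd he1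
        omega
      exact List.count_pos_iff.mp (Nat.pos_of_ne_zero this)
    · rw [hWe]
      have hc1 : C1.edges.count e1 = 1 := List.count_eq_one_of_mem hC1nd he1
      have hc2 : C2.edges.count e1 = 0 := List.count_eq_zero_of_not_mem he2
      have hp : P.edges.count e1 = 0 := by
        apply List.count_eq_zero_of_not_mem
        intro hmem
        exact p4 e1 hmem he1
      omega
  · intro e _
    rw [hWe]
    by_cases heP : e ∈ P.edges
    · have hc1 : C1.edges.count e = 0 := List.count_eq_zero_of_not_mem (p4 e heP)
      have hc2 : C2.edges.count e = 0 := List.count_eq_zero_of_not_mem (p5 e heP)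
      have hp : P.edges.count e ≤ 1 := List.nodup_iff_count_le_one.mp hPnd e
      omega
    · have hp : P.edges.count e = 0 := List.count_eq_zero_of_not_mem heP
      have hc1 : C1.edges.count e ≤ 1 := List.nodup_iff_count_le_one.mp hC1nd e
      have hc2 : C2.edges.count e ≤ 1 := List.nodup_iff_count_le_one.mp hC2nd e
      omega

/-- Deleting an edge whose endpoints remain reachable preserves preconnectedness. -/
lemma preconnected_sdiff {x y : V} (hpre : G.Preconnected)
    (hxy : (G \ SimpleGraph.fromEdgeSet {s(x, y)}).Reachable x y) :
    (G \ SimpleGraph.fromEdgeSet {s(x, y)}).Preconnected := by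
  intro s t
  obtain ⟨w⟩ := hpre s t
  induction w with
  | nil => exact SimpleGraph.Reachable.refl _
  | @cons s c t hadj w ih =>
    refine SimpleGraph.Reachable.trans ?_ ih
    by_cases he : s(s, c) = s(x, y)
    · rw [Sym2.eq_iff] at he
      rcases he with ⟨rfl, rfl⟩ | ⟨rfl, rfl⟩
      · exact hxy
      · exact hxy.symm
    · refine SimpleGraph.Adj.reachable ?_
      rw [SimpleGraph.sdiff_adj]
      refine ⟨hadj, ?_⟩
      rw [SimpleGraph.fromEdgeSet_adj]
      rintro ⟨hmem, -⟩
      exact he hmem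

/-- The no-nontrivial-even-closed-walk property transfers along graph embeddings. -/
lemma hyp_transfer {W : Type*} [DecidableEq W] {G' : SimpleGraph W} (f : G' ↪g G)
    (h : ¬ ∃ (v : V) (w : G.Walk v v), IsNontrivialEvenClosedWalk w) :
    ¬ ∃ (v : W) (w : G'.Walk v v), IsNontrivialEvenClosedWalk w := by
  rintro ⟨v, w, hpos, hev, ⟨e, he, hc1⟩, hle⟩
  have hinj : Function.Injective (Sym2.map (f.toHom : W → V)) := Sym2.map.injective f.injective
  refine h ⟨f v, w.map f.toHom, ?_, ?_, ?_, ?_⟩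
  · rwa [SimpleGraph.Walk.length_map]
  · rwa [SimpleGraph.Walk.length_map]
  · refine ⟨Sym2.map (f.toHom : W → V) e, ?_, ?_⟩
    · rw [SimpleGraph.Walk.edges_map]
      exact List.mem_map_of_mem he
    · rw [SimpleGraph.Walk.edges_map, List.count_map_of_injective _ _ hinj]
      exact hc1
  · intro e' he'
    rw [SimpleGraph.Walk.edges_map] at he' ⊢
    obtain ⟨e0, he0, rfl⟩ := List.mem_map.mp he'
    rw [List.count_map_of_injective _ _ hinj]
    exact hle e0 he0

end Aux

section Connected

variable {V : Type*} [Fintype V] [DecidableEq V] {G : SimpleGraph V}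

lemma ncard_eq_edgeFinset_card [Fintype G.edgeSet] :
    G.edgeSet.ncard = G.edgeFinset.card := by
  rw [SimpleGraph.edgeFinset, Set.ncard_eq_toFinset_card']

lemma connected_case (hc : G.Connected)
    (h : ¬ ∃ (v : V) (w : G.Walk v v), IsNontrivialEvenClosedWalk w) :
    G.edgeSet.ncard ≤ Fintype.card V := by
  classical
  by_cases hac : G.IsAcyclic
  · have ht : G.IsTree := ⟨hc, hac⟩
    rw [ncard_eq_edgeFinset_card]
    have := ht.card_edgeFinset
    omega
  · -- get a cycle
    have hcyc : ∃ (a : V) (C : G.Walk a a), C.IsCycle := by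
      by_contra hno
      push_neg at hno
      exact hac (fun v c hc' => hno v c hc')
    obtain ⟨a, C1, h1⟩ := hcyc
    by_contra hcard
    push_neg at hcard
    -- pick an edge of C1
    have hne : C1.edges ≠ [] := by
      intro h0
      have h3 := h1.three_le_length
      have := C1.length_edges
      rw [h0] at this
      simp at this
      omega
    obtain ⟨e1, he1⟩ := List.exists_mem_of_ne_nil _ hne
    induction e1 using Sym2.ind with
    | _ x y =>
    have he1E : s(x, y) ∈ G.edgeSet := C1.edges_subset_edgeSet he1
    set G' : SimpleGraph V := G \ SimpleGraph.fromEdgeSet {s(x, y)} with hG'def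
    have hreach : G'.Reachable x y :=
      (SimpleGraph.adj_and_reachable_delete_edges_iff_exists_cycle.mpr ⟨a, C1, h1, he1⟩).2
    have hpre' : G'.Preconnected := preconnected_sdiff hc.preconnected hreach
    have hnev : Nonempty V := hc.nonempty
    have hconn' : G'.Connected := ⟨hpre'⟩
    have hEG' : G'.edgeSet = G.edgeSet \ {s(x, y)} := by
      rw [hG'def, SimpleGraph.edgeSet_sdiff, SimpleGraph.edgeSet_fromEdgeSet,
        SimpleGraph.edgeSet_sdiff_sdiff_isDiag]
    have hcard' : G'.edgeSet.ncard = G.edgeSet.ncard - 1 := by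
      rw [hEG', Set.ncard_diff_singleton_of_mem he1E]
    -- G' is not acyclic
    have hnac' : ¬ G'.IsAcyclic := by
      intro hac'
      have ht' : G'.IsTree := ⟨hconn', hac'⟩
      have := ht'.card_edgeFinset
      have h2 : G'.edgeSet.ncard = G'.edgeFinset.card := ncard_eq_edgeFinset_card
      have hVpos : 0 < Fintype.card V := Fintype.card_pos_iff.mpr hc.nonempty
      omega
    have hcyc' : ∃ (b : V) (C : G'.Walk b b), C.IsCycle := by
      by_contra hno
      push_neg at hno
      exact hnac' (fun v c hc' => hno v c hc')
    obtain ⟨b, C2', h2'⟩ := hcyc'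
    -- transfer C2' to G
    have hle : G' ≤ G := sdiff_le
    have hedges : ∀ e ∈ C2'.edges, e ∈ G.edgeSet := fun e he =>
      SimpleGraph.edgeSet_mono hle (C2'.edges_subset_edgeSet he)
    let C2 : G.Walk b b := C2'.transfer G hedges
    have h2 : C2.IsCycle := h2'.transfer hedges
    have he2 : s(x, y) ∉ C2.edges := by
      show s(x, y) ∉ (C2'.transfer G hedges).edges
      rw [SimpleGraph.Walk.edges_transfer]
      intro hmem
      have := C2'.edges_subset_edgeSet hmem
      rw [hEG'] at this
      exact this.2 rfl
    exact h (combine hc.preconnected h1 h2 he1 he2)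

end Connected

lemma edgeSet_ncard_zero_of_isEmpty {V : Type*} [IsEmpty V] (G : SimpleGraph V) :
    G.edgeSet.ncard = 0 := by
  have : G.edgeSet = ∅ := by
    ext e
    induction e using Sym2.ind with
    | _ x y => exact (IsEmpty.false x).elim
  rw [this, Set.ncard_empty]

universe u

lemma stmt_aux : ∀ (n : ℕ) (V : Type u) [Fintype V] [DecidableEq V] (G : SimpleGraph V),
    Fintype.card V ≤ n → (¬ ∃ (v : V) (w : G.Walk v v), IsNontrivialEvenClosedWalk w) →
    G.edgeSet.ncard ≤ Fintype.card V := by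
  intro n
  induction n with
  | zero =>
    intro V _ _ G hcard h
    have : IsEmpty V := Fintype.card_eq_zero_iff.mp (Nat.le_zero.mp hcard)
    rw [edgeSet_ncard_zero_of_isEmpty]
    exact Nat.zero_le _
  | succ n ih =>
    intro V _ _ G hcard h
    classical
    by_cases hemp : IsEmpty V
    · rw [edgeSet_ncard_zero_of_isEmpty]
      exact Nat.zero_le _
    rw [not_isEmpty_iff] at hemp
    by_cases hconn : G.Connected
    · exact connected_case hconn h
    · haveI := hemp
      have hnpre : ¬ G.Preconnected := fun hp => hconn ⟨hp⟩
      rw [SimpleGraph.Preconnected] at hnpre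
      push_neg at hnpre
      obtain ⟨x, y, hxy⟩ := hnpre
      set S : Set V := {z | G.Reachable x z} with hSdef
      have hx : x ∈ S := SimpleGraph.Reachable.refl x
      have hy : y ∉ S := hxy
      have hcl : ∀ a b, G.Adj a b → (a ∈ S ↔ b ∈ S) := fun a b hab =>
        ⟨fun ha => ha.trans hab.reachable, fun hb => hb.trans hab.symm.reachable⟩
      -- edge partition
      have hsub : G.edgeSet ⊆
          (Sym2.map (Subtype.val : S → V) '' (G.induce S).edgeSet) ∪
          (Sym2.map (Subtype.val : ↥Sᶜ → V) '' (G.induce Sᶜ).edgeSet) := by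
        intro e he
        induction e using Sym2.ind with
        | _ a b =>
        have hab : G.Adj a b := he
        by_cases haS : a ∈ S
        · left
          refine ⟨s(⟨a, haS⟩, ⟨b, (hcl a b hab).mp haS⟩), ?_, by simp⟩
          exact hab
        · right
          have hbS : b ∉ S := fun hbS => haS ((hcl a b hab).mpr hbS)
          refine ⟨s(⟨a, haS⟩, ⟨b, hbS⟩), ?_, by simp⟩
          exact hab
      have hinjS : Function.Injective (Sym2.map (Subtype.val : S → V)) :=
        Sym2.map.injective Subtype.val_injective
      have hinjSc : Function.Injective (Sym2.map (Subtype.val : ↥Sᶜ → V)) :=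
        Sym2.map.injective Subtype.val_injective
      have hcardS : Fintype.card S < Fintype.card V := Fintype.card_subtype_lt (x := y) hy
      have hcardSc : Fintype.card ↥Sᶜ < Fintype.card V :=
        Fintype.card_subtype_lt (x := x) (by simp [hx])
      have h1 : (G.induce S).edgeSet.ncard ≤ Fintype.card S :=
        ih S (G.induce S) (by omega) (hyp_transfer (SimpleGraph.Embedding.induce S) h)
      have h2 : (G.induce Sᶜ).edgeSet.ncard ≤ Fintype.card ↥Sᶜ :=
        ih ↥Sᶜ (G.induce Sᶜ) (by omega) (hyp_transfer (SimpleGraph.Embedding.induce Sᶜ) h)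
      have hsum : Fintype.card S + Fintype.card ↥Sᶜ = Fintype.card V := by
        rw [← Set.toFinset_card, ← Set.toFinset_card, Set.toFinset_compl,
          Finset.card_add_card_compl]
      calc G.edgeSet.ncard
          ≤ ((Sym2.map (Subtype.val : S → V) '' (G.induce S).edgeSet) ∪
            (Sym2.map (Subtype.val : ↥Sᶜ → V) '' (G.induce Sᶜ).edgeSet)).ncard :=
            Set.ncard_le_ncard hsub (Set.toFinite _)
        _ ≤ (Sym2.map (Subtype.val : S → V) '' (G.induce S).edgeSet).ncard +
            (Sym2.map (Subtype.val : ↥Sᶜ → V) '' (G.induce Sᶜ).edgeSet).ncard :=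
            Set.ncard_union_le _ _
        _ = (G.induce S).edgeSet.ncard + (G.induce Sᶜ).edgeSet.ncard := by
            rw [Set.ncard_image_of_injective _ hinjS, Set.ncard_image_of_injective _ hinjSc]
        _ ≤ Fintype.card S + Fintype.card ↥Sᶜ := Nat.add_le_add h1 h2
        _ = Fintype.card V := hsum

theorem stmt_3 (V : Type*) [Fintype V] [DecidableEq V] (G : SimpleGraph V)
    (h : ¬ ∃ (v : V) (w : G.Walk v v), IsNontrivialEvenClosedWalk w) :
    G.edgeSet.ncard ≤ Fintype.card V := by
  exact stmt_aux (Fintype.card V) V G le_rfl h
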